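/- The generalised quasi-shuffle product ⋆ on ℚ⟨Z⟩, defined recursively by w⋆1 = 1⋆w = w and (au)⋆(bv) = a(u⋆(bv)) + b((au)⋆v) − L_{a◊b}(u⋆v), is associative. -/

import Mathlib

/- The generalised quasi-shuffle product on ℚ⟨Z⟩, for a commutative associative
bilinear product ◊ (here `D`) on ℚZ = Z →₀ ℚ, is commutative. -/

/-- Noncommutative polynomials ℚ⟨Z⟩, as finitely supported functions on words. -/
abbrev QW (Z : Type*) := List Z →₀ ℚ

/-- Prepend a letter to every word of a polynomial: `a·p`. -/
noncomputable def pre {Z : Type*} (a : Z) (p : QW Z) : QW Z :=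
  Finsupp.mapDomain (a :: ·) p

/-- `Lw D c w` is `L_c(w)`: for `w = x t`, it is `(c ◊ x) t`, and `L_c(1) = 0`. -/
noncomputable def Lw {Z : Type*} (D : (Z →₀ ℚ) →ₗ[ℚ] (Z →₀ ℚ) →ₗ[ℚ] (Z →₀ ℚ))
    (c : Z →₀ ℚ) : List Z → QW Z
  | [] => 0
  | x :: t => (D c (Finsupp.single x 1)).sum fun b r => Finsupp.single (b :: t) r

/-- Linear extension of `L_c` to ℚ⟨Z⟩. -/
noncomputable def Lmap {Z : Type*} (D : (Z →₀ ℚ) →ₗ[ℚ] (Z →₀ ℚ) →ₗ[ℚ] (Z →₀ ℚ))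
    (c : Z →₀ ℚ) (p : QW Z) : QW Z :=
  p.sum fun w r => r • Lw D c w

/-- The generalised quasi-shuffle product of two words:
`(au) ⋆ (bv) = a(u ⋆ bv) + b(au ⋆ v) − L_{a◊b}(u ⋆ v)`. -/
noncomputable def star {Z : Type*} (D : (Z →₀ ℚ) →ₗ[ℚ] (Z →₀ ℚ) →ₗ[ℚ] (Z →₀ ℚ)) :
    List Z → List Z → QW Z
  | [], v => Finsupp.single v 1
  | u, [] => Finsupp.single u 1
  | a :: u, b :: v =>
      pre a (star D u (b :: v)) + pre b (star D (a :: u) v)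
        - Lmap D (D (Finsupp.single a 1) (Finsupp.single b 1)) (star D u v)
  termination_by u v => u.length + v.length

/-- Bilinear extension of `star` to ℚ⟨Z⟩. -/
noncomputable def starP {Z : Type*} (D : (Z →₀ ℚ) →ₗ[ℚ] (Z →₀ ℚ) →ₗ[ℚ] (Z →₀ ℚ))
    (p q : QW Z) : QW Z :=
  p.sum fun u r => q.sum fun v s => (r * s) • star D u v

section Aux
variable {Z : Type*} (D : (Z →₀ ℚ) →ₗ[ℚ] (Z →₀ ℚ) →ₗ[ℚ] (Z →₀ ℚ))

/-- prepend a single letter, as a linear map. -/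
noncomputable def preL (a : Z) : QW Z →ₗ[ℚ] QW Z := Finsupp.lmapDomain ℚ ℚ (a :: ·)

lemma preL_eq (a : Z) (p : QW Z) : preL a p = pre a p := rfl

/-- prepend a ℚZ-letter, bilinear. -/
noncomputable def PQ : (Z →₀ ℚ) →ₗ[ℚ] QW Z →ₗ[ℚ] QW Z :=
  Finsupp.lsum ℚ fun a => LinearMap.toSpanSingleton ℚ _ (preL a)

lemma PQ_single (a : Z) : PQ (Finsupp.single a 1) = preL (Z := Z) a := by
  simp [PQ]

/-- L_c on a word, linear in c. -/
noncomputable def LwL : List Z → (Z →₀ ℚ) →ₗ[ℚ] QW Z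
  | [] => 0
  | x :: t => (Finsupp.lmapDomain ℚ ℚ (· :: t)).comp (D.flip (Finsupp.single x 1))

lemma LwL_eq (c : Z →₀ ℚ) : ∀ w : List Z, LwL D w c = Lw D c w
  | [] => rfl
  | x :: t => by
      simp only [LwL, Lw, LinearMap.comp_apply, LinearMap.flip_apply]
      rfl

/-- Bilinear version of Lmap. -/
noncomputable def LL : (Z →₀ ℚ) →ₗ[ℚ] QW Z →ₗ[ℚ] QW Z :=
  (Finsupp.lsum ℚ fun w => LinearMap.toSpanSingleton ℚ _ (LwL D w)).flip

lemma LL_apply (c : Z →₀ ℚ) (p : QW Z) : LL D c p = Lmap D c p := by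
  simp only [LL, Lmap, LinearMap.flip_apply, Finsupp.lsum_apply]
  rw [LinearMap.finsupp_sum_apply]
  apply Finsupp.sum_congr
  intro w _
  simp [LwL_eq, LinearMap.toSpanSingleton_apply]

/-- Bilinear version of starP. -/
noncomputable def SP : QW Z →ₗ[ℚ] QW Z →ₗ[ℚ] QW Z :=
  Finsupp.lsum ℚ fun u => LinearMap.toSpanSingleton ℚ _
    (Finsupp.lsum ℚ fun v => LinearMap.toSpanSingleton ℚ _ (star D u v))

lemma SP_apply (p q : QW Z) : SP D p q = starP D p q := by
  simp only [SP, starP, Finsupp.lsum_apply]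
  rw [LinearMap.finsupp_sum_apply]
  apply Finsupp.sum_congr
  intro u _
  simp only [LinearMap.toSpanSingleton_apply, LinearMap.smul_apply, Finsupp.lsum_apply,
    Finsupp.smul_sum]
  apply Finsupp.sum_congr
  intro v _
  simp [mul_smul, LinearMap.toSpanSingleton_apply]

lemma SP_single_single (u v : List Z) :
    SP D (Finsupp.single u 1) (Finsupp.single v 1) = star D u v := by
  simp [SP]

end Aux
section Aux2
variable {Z : Type*} (D : (Z →₀ ℚ) →ₗ[ℚ] (Z →₀ ℚ) →ₗ[ℚ] (Z →₀ ℚ))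

lemma star_nil_left (v : List Z) : star D [] v = Finsupp.single v 1 := by
  cases v <;> (rw [star.eq_def])

lemma star_nil_right (u : List Z) : star D u [] = Finsupp.single u 1 := by
  cases u <;> rw [star.eq_def]

lemma star_cons_cons (a b : Z) (u v : List Z) :
    star D (a :: u) (b :: v) =
      pre a (star D u (b :: v)) + pre b (star D (a :: u) v)
        - Lmap D (D (Finsupp.single a 1) (Finsupp.single b 1)) (star D u v) := by
  rw [star.eq_def]
end Aux2
section Aux3
variable {Z : Type*} (D : (Z →₀ ℚ) →ₗ[ℚ] (Z →₀ ℚ) →ₗ[ℚ] (Z →₀ ℚ))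

lemma sm {α : Type*} (w : α) (r : ℚ) :
    (Finsupp.single w r : α →₀ ℚ) = r • Finsupp.single w 1 := by
  rw [Finsupp.smul_single, smul_eq_mul, mul_one]

lemma pre_single (a : Z) (t : List Z) (r : ℚ) :
    pre a (Finsupp.single t r) = Finsupp.single (a :: t) r := by
  simp [pre]

lemma PQ_apply (c : Z →₀ ℚ) (p : QW Z) :
    PQ c p = c.sum fun a r => r • pre a p := by
  simp only [PQ, Finsupp.lsum_apply]
  rw [LinearMap.finsupp_sum_apply]
  apply Finsupp.sum_congr
  intro a _
  simp [LinearMap.toSpanSingleton_apply, preL_eq]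

lemma PQ_single_apply (a : Z) (p : QW Z) :
    PQ (Finsupp.single a 1) p = pre a p := by rw [PQ_single]; rfl

lemma single_cons (a : Z) (t : List Z) :
    (Finsupp.single (a :: t) 1 : QW Z)
      = PQ (Finsupp.single a 1) (Finsupp.single t 1) := by
  rw [PQ_single_apply, pre_single]

lemma Lmap_single (c : Z →₀ ℚ) (w : List Z) (r : ℚ) :
    Lmap D c (Finsupp.single w r) = r • Lw D c w := by
  rw [Lmap, Finsupp.sum_single_index]
  simp

lemma LL_nil (e : Z →₀ ℚ) (r : ℚ) :
    LL D e (Finsupp.single ([] : List Z) r) = 0 := by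
  rw [LL_apply, Lmap_single]
  simp [Lw]

lemma LL_cons (e : Z →₀ ℚ) (x : Z) (t : List Z) :
    LL D e (Finsupp.single (x :: t) 1)
      = PQ (D e (Finsupp.single x 1)) (Finsupp.single t 1) := by
  rw [LL_apply, Lmap_single, one_smul, PQ_apply, Lw]
  apply Finsupp.sum_congr
  intro b _
  rw [pre_single, Finsupp.smul_single, smul_eq_mul, mul_one]

/-- the recursion, in SP form, on single words. -/
lemma Rw (a b : Z) (u v : List Z) :
    SP D (Finsupp.single (a :: u) 1) (Finsupp.single (b :: v) 1) =
      PQ (Finsupp.single a 1) (SP D (Finsupp.single u 1) (Finsupp.single (b :: v) 1))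
      + PQ (Finsupp.single b 1) (SP D (Finsupp.single (a :: u) 1) (Finsupp.single v 1))
      - LL D (D (Finsupp.single a 1) (Finsupp.single b 1))
          (SP D (Finsupp.single u 1) (Finsupp.single v 1)) := by
  simp only [SP_single_single, PQ_single_apply, LL_apply, preL_eq]
  rw [star_cons_cons]

lemma SP_nil_left (p : QW Z) : SP D (Finsupp.single ([] : List Z) 1) p = p := by
  induction p using Finsupp.induction_linear with
  | zero => simp
  | add p q hp hq => rw [map_add, hp, hq]
  | single w r => rw [sm w r, map_smul, SP_single_single, star_nil_left, ← sm]

lemma SP_nil_right (p : QW Z) : SP D p (Finsupp.single ([] : List Z) 1) = p := by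
  induction p using Finsupp.induction_linear with
  | zero => simp
  | add p q hp hq => rw [map_add, LinearMap.add_apply, hp, hq]
  | single w r =>
      rw [sm w r, map_smul, LinearMap.smul_apply, SP_single_single, star_nil_right, ← sm]

/-- (L1): `L_e (f · p) = (e ◊ f) · p`. -/
lemma L1 (e f : Z →₀ ℚ) (p : QW Z) : LL D e (PQ f p) = PQ (D e f) p := by
  induction f using Finsupp.induction_linear with
  | zero => simp
  | add f g hf hg => simp only [map_add, LinearMap.add_apply]; rw [hf, hg]
  | single b s =>
      rw [sm b s]
      simp only [map_smul, LinearMap.smul_apply]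
      congr 1
      induction p using Finsupp.induction_linear with
      | zero => simp
      | add p q hp hq => simp only [map_add]; rw [hp, hq]
      | single w r =>
          rw [sm w r]
          simp only [map_smul]
          congr 1
          rw [PQ_single_apply, pre_single, LL_cons]

/-- (L3): `L_e ∘ L_c = L_{e◊c}`. -/
lemma L3 (hassoc : ∀ x y z, D (D x y) z = D x (D y z)) (e c : Z →₀ ℚ) (p : QW Z) :
    LL D e (LL D c p) = LL D (D e c) p := by
  induction p using Finsupp.induction_linear with
  | zero => simp
  | add p q hp hq => simp only [map_add]; rw [hp, hq]
  | single w r =>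
      rw [sm w r]
      simp only [map_smul]
      congr 1
      cases w with
      | nil => rw [LL_nil, LL_nil, map_zero]
      | cons x t => rw [LL_cons, LL_cons, L1, hassoc]

end Aux3
section Aux4
variable {Z : Type*} (D : (Z →₀ ℚ) →ₗ[ℚ] (Z →₀ ℚ) →ₗ[ℚ] (Z →₀ ℚ))

/-- (R): the recursion at the level of polynomials and ℚZ-letters. -/
lemma R (e f : Z →₀ ℚ) (p q : QW Z) :
    SP D (PQ e p) (PQ f q) =
      PQ e (SP D p (PQ f q)) + PQ f (SP D (PQ e p) q) - LL D (D e f) (SP D p q) := by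
  induction e using Finsupp.induction_linear with
  | zero => simp
  | add e e' he he' =>
      simp only [map_add, LinearMap.add_apply]
      rw [he, he']; abel
  | single a s =>
    rw [sm a s]
    simp only [map_smul, LinearMap.smul_apply]
    rw [← smul_add, ← smul_sub]
    congr 1
    induction f using Finsupp.induction_linear with
    | zero => simp
    | add f f' hf hf' =>
        simp only [map_add, LinearMap.add_apply]
        rw [hf, hf']; abel
    | single b t =>
      rw [sm b t]
      simp only [map_smul, LinearMap.smul_apply]
      rw [← smul_add, ← smul_sub]
      congr 1
      induction p using Finsupp.induction_linear with
      | zero => simp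
      | add p p' hp hp' =>
          simp only [map_add, LinearMap.add_apply]
          rw [hp, hp']; abel
      | single u r =>
        rw [sm u r]
        simp only [map_smul, LinearMap.smul_apply]
        rw [← smul_add, ← smul_sub]
        congr 1
        induction q using Finsupp.induction_linear with
        | zero => simp
        | add q q' hq hq' =>
            simp only [map_add, LinearMap.add_apply]
            rw [hq, hq']; abel
        | single v r' =>
          rw [sm v r']
          simp only [map_smul, LinearMap.smul_apply]
          rw [← smul_add, ← smul_sub]
          congr 1
          rw [← single_cons a u, ← single_cons b v, Rw]

/-- (LS): product with an `L` on the left slot. -/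
lemma LS (hassoc : ∀ x y z, D (D x y) z = D x (D y z))
    (e f : Z →₀ ℚ) (p q : QW Z) :
    SP D (LL D e p) (PQ f q) =
      LL D e (SP D p (PQ f q)) + PQ f (SP D (LL D e p) q)
        - PQ (D e f) (SP D p q) := by
  induction p using Finsupp.induction_linear with
  | zero => simp
  | add p p' hp hp' =>
      simp only [map_add, LinearMap.add_apply]
      rw [hp, hp']; abel
  | single w r =>
    rw [sm w r]
    simp only [map_smul, LinearMap.smul_apply]
    rw [← smul_add, ← smul_sub]
    congr 1
    cases w with
    | nil =>
        rw [LL_nil, SP_nil_left, SP_nil_left, L1]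
        simp
    | cons x t =>
        rw [LL_cons, single_cons x t, R, R]
        simp only [map_add, map_sub]
        rw [L1, L1, L3 D hassoc, hassoc]
        abel

/-- (SR): product with an `L` on the right slot. -/
lemma SR (hcomm : ∀ x y, D x y = D y x)
    (hassoc : ∀ x y z, D (D x y) z = D x (D y z))
    (e f : Z →₀ ℚ) (p q : QW Z) :
    SP D (PQ e p) (LL D f q) =
      PQ e (SP D p (LL D f q)) + LL D f (SP D (PQ e p) q)
        - PQ (D e f) (SP D p q) := by
  induction q using Finsupp.induction_linear with
  | zero => simp
  | add q q' hq hq' =>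
      simp only [map_add, LinearMap.add_apply]
      rw [hq, hq']; abel
  | single w r =>
    rw [sm w r]
    simp only [map_smul, LinearMap.smul_apply]
    rw [← smul_add, ← smul_sub]
    congr 1
    cases w with
    | nil =>
        rw [LL_nil, SP_nil_right, SP_nil_right, L1, hcomm f e]
        simp
    | cons y s =>
        rw [LL_cons, single_cons y s, R, R]
        simp only [map_add, map_sub]
        rw [L1, L1, L3 D hassoc, ← hassoc, ← hassoc, hcomm f e]
        abel

end Aux4
section Aux5
variable {Z : Type*} (D : (Z →₀ ℚ) →ₗ[ℚ] (Z →₀ ℚ) →ₗ[ℚ] (Z →₀ ℚ))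

lemma wordAssoc (hcomm : ∀ x y, D x y = D y x)
    (hassoc : ∀ x y z, D (D x y) z = D x (D y z)) :
    ∀ n (u v w : List Z), u.length + v.length + w.length ≤ n →
      SP D (SP D (Finsupp.single u 1) (Finsupp.single v 1)) (Finsupp.single w 1)
        = SP D (Finsupp.single u 1) (SP D (Finsupp.single v 1) (Finsupp.single w 1)) := by
  intro n
  induction n with
  | zero =>
      intro u v w h
      have hu : u = [] := by
        cases u with
        | nil => rfl
        | cons x t => simp at h
      subst hu
      rw [SP_nil_left, SP_nil_left]
  | succ n ih =>
      intro u v w h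
      cases u with
      | nil => rw [SP_nil_left, SP_nil_left]
      | cons a u =>
      cases v with
      | nil => rw [SP_nil_right, SP_nil_left]
      | cons b v =>
      cases w with
      | nil => rw [SP_nil_right, SP_nil_right]
      | cons c w =>
      simp only [List.length_cons] at h
      have IH1 := ih u (b::v) (c::w) (by simp only [List.length_cons]; omega)
      have IH2 := ih (a::u) v (c::w) (by simp only [List.length_cons]; omega)
      have IH3 := ih (a::u) (b::v) w (by simp only [List.length_cons]; omega)
      have IH4 := ih u v (c::w) (by simp only [List.length_cons]; omega)
      have IH5 := ih u (b::v) w (by simp only [List.length_cons]; omega)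
      have IH6 := ih (a::u) v w (by simp only [List.length_cons]; omega)
      have IH7 := ih u v w (by omega)
      rw [Rw D a b u v, Rw D b c v w]
      rw [single_cons a u, single_cons b v, single_cons c w]
      simp only [map_add, map_sub, LinearMap.add_apply, LinearMap.sub_apply]
      rw [R D, R D, R D, R D, LS D hassoc, SR D hcomm hassoc]
      rw [← single_cons a u, ← single_cons b v, ← single_cons c w]
      rw [IH1, IH2, IH4, IH5, IH6, IH7, ← IH3]
      rw [Rw D b c v w, Rw D a b u v]
      simp only [map_add, map_sub, LinearMap.add_apply, LinearMap.sub_apply]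
      rw [hassoc]
      abel

end Aux5
section Aux6
variable {Z : Type*} (D : (Z →₀ ℚ) →ₗ[ℚ] (Z →₀ ℚ) →ₗ[ℚ] (Z →₀ ℚ))

lemma SP_assoc (hcomm : ∀ x y, D x y = D y x)
    (hassoc : ∀ x y z, D (D x y) z = D x (D y z)) (p q r : QW Z) :
    SP D (SP D p q) r = SP D p (SP D q r) := by
  have key : ∀ u v w : List Z,
      SP D (SP D (Finsupp.single u 1) (Finsupp.single v 1)) (Finsupp.single w 1)
        = SP D (Finsupp.single u 1) (SP D (Finsupp.single v 1) (Finsupp.single w 1)) :=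
    fun u v w => wordAssoc D hcomm hassoc (u.length + v.length + w.length) u v w le_rfl
  induction p using Finsupp.induction_linear with
  | zero => simp
  | add p p' hp hp' => simp only [map_add, LinearMap.add_apply]; rw [hp, hp']
  | single u ru =>
    rw [sm u ru]
    simp only [map_smul, LinearMap.smul_apply]
    congr 1
    induction q using Finsupp.induction_linear with
    | zero => simp
    | add q q' hq hq' => simp only [map_add, LinearMap.add_apply]; rw [hq, hq']
    | single v rv =>
      rw [sm v rv]
      simp only [map_smul, LinearMap.smul_apply]
      congr 1
      induction r using Finsupp.induction_linear with
      | zero => simp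
      | add r r' hr hr' => simp only [map_add]; rw [hr, hr']
      | single w rw' =>
        rw [sm w rw']
        simp only [map_smul]
        congr 1
        exact key u v w

end Aux6
/-- the generalised quasi-shuffle product is associative. -/
theorem generalised_quasi_shuffle_assoc {Z : Type*}
    (D : (Z →₀ ℚ) →ₗ[ℚ] (Z →₀ ℚ) →ₗ[ℚ] (Z →₀ ℚ))
    (hcomm : ∀ x y, D x y = D y x)
    (hassoc : ∀ x y z, D (D x y) z = D x (D y z)) :
    ∀ p q r : QW Z, starP D (starP D p q) r = starP D p (starP D q r) := by
  intro p q r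
  simp only [← SP_apply]
  exact SP_assoc D hcomm hassoc p q r
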